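/- For the Thue-Morse word t, let f_{aa}(n) be the number of factors of t of length n that begin and end with the same letter, and p(n) the number of factors of t of length n. Then for every n ≥ 2, f_{aa}(n) ≥ p(n)/3 and likewise the number f_{ab}(n) of factors of length n beginning and ending with different letters satisfies f_{ab}(n) ≥ p(n)/3. -/

import Mathlib

/-- The Thue-Morse word: `tm n` is the parity of the number of `1`'s in the
binary expansion of `n`. -/
def tm (n : ℕ) : Bool := (Nat.digits 2 n).sum % 2 == 1

/-- `u` is a factor of the infinite word `s`. -/
def FactorOf {A : Type*} (u : List A) (s : ℕ → A) : Prop :=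
  ∃ i : ℕ, u = (List.range u.length).map fun k => s (i + k)

namespace TM8

def win (i n : ℕ) : List Bool := (List.range n).map fun k => tm (i + k)

def mu : List Bool → List Bool
  | [] => []
  | a :: l => a :: (!a) :: mu l

def evens : List Bool → List Bool
  | [] => []
  | [a] => [a]
  | a :: _ :: l => a :: evens l

lemma tm_two_mul (k : ℕ) : tm (2 * k) = tm k := by
  rcases Nat.eq_zero_or_pos k with h | h
  · simp [h]
  · unfold tm
    rw [Nat.digits_def' (by norm_num : (1:ℕ) < 2) (by omega)]
    have h1 : 2 * k % 2 = 0 := by omega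
    have h2 : 2 * k / 2 = k := by omega
    rw [h1, h2]
    simp

lemma tm_two_mul_add_one (k : ℕ) : tm (2 * k + 1) = !tm k := by
  unfold tm
  rw [Nat.digits_def' (by norm_num : (1:ℕ) < 2) (by omega)]
  have h1 : (2 * k + 1) % 2 = 1 := by omega
  have h2 : (2 * k + 1) / 2 = k := by omega
  rw [h1, h2]
  rcases Nat.mod_two_eq_zero_or_one (Nat.digits 2 k).sum with h | h <;>
    simp [List.sum_cons, Nat.add_mod, h]

lemma tm_succ_two_mul (k : ℕ) : tm (2 * k + 1) = !tm (2 * k) := by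
  rw [tm_two_mul_add_one, tm_two_mul]

lemma no_three (m : ℕ) : ¬ (tm m = tm (m + 1) ∧ tm (m + 1) = tm (m + 2)) := by
  rintro ⟨h1, h2⟩
  rcases Nat.even_or_odd m with ⟨r, hr⟩ | ⟨r, hr⟩
  · have h := tm_succ_two_mul r
    have hm : m = 2 * r := by omega
    subst hm
    rw [h1] at h
    cases tm (2 * r + 1) <;> simp_all
  · have h := tm_succ_two_mul (r + 1)
    have hm : m = 2 * r + 1 := by omega
    subst hm
    rw [show 2 * r + 1 + 1 = 2 * (r + 1) by ring] at h2
    rw [show 2 * r + 1 + 2 = 2 * (r + 1) + 1 by ring] at h2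
    rw [h2] at h
    cases tm (2 * (r + 1) + 1) <;> simp_all

lemma alt_aux {j : ℕ} (h1 : tm (2 * j + 1) ≠ tm (2 * j + 2)) (h2 : tm (2 * j + 3) ≠ tm (2 * j + 4)) :
    False := by
  rw [tm_two_mul_add_one, show 2 * j + 2 = 2 * (j + 1) by ring, tm_two_mul] at h1
  rw [show 2 * j + 3 = 2 * (j + 1) + 1 by ring, tm_two_mul_add_one,
    show 2 * j + 4 = 2 * (j + 2) by ring, tm_two_mul] at h2
  have e1 : tm j = tm (j + 1) := by
    cases h : tm j <;> cases h' : tm (j + 1) <;> simp_all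
  have e2 : tm (j + 1) = tm (j + 2) := by
    cases h : tm (j + 1) <;> cases h' : tm (j + 2) <;> simp_all
  exact no_three j ⟨e1, e2⟩


/-! ### window lemmas -/

@[simp] lemma win_length (i n : ℕ) : (win i n).length = n := by simp [win]

lemma win_zero (i : ℕ) : win i 0 = [] := rfl

lemma win_succ (i n : ℕ) : win i (n + 1) = tm i :: win (i + 1) n := by
  unfold win
  rw [List.range_succ_eq_map, List.map_cons, List.map_map]
  simp only [Nat.add_zero]
  congr 1
  apply List.map_congr_left
  intro k _
  simp only [Function.comp_apply]
  congr 1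
  omega

lemma win_snoc (i n : ℕ) : win i (n + 1) = win i n ++ [tm (i + n)] := by
  unfold win
  rw [List.range_succ, List.map_append]
  rfl

lemma win_getElem? {k n : ℕ} (i : ℕ) (hk : k < n) : (win i n)[k]? = some (tm (i + k)) := by
  simp [win, List.getElem?_map, List.getElem?_range hk]

lemma win_entries {i i' n : ℕ} (h : win i n = win i' n) :
    ∀ k, k < n → tm (i + k) = tm (i' + k) := by
  intro k hk
  have h1 := win_getElem? i hk
  have h2 := win_getElem? i' hk
  rw [h] at h1
  rw [h1] at h2
  exact Option.some.inj h2

lemma mu_win (j n : ℕ) : mu (win j n) = win (2 * j) (2 * n) := by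
  induction n generalizing j with
  | zero => rfl
  | succ n ih =>
    rw [win_succ]
    show tm j :: (!tm j) :: mu (win (j + 1) n) = _
    rw [ih (j + 1), show 2 * (n + 1) = (2 * n + 1) + 1 by ring, win_succ, win_succ,
      tm_two_mul, tm_two_mul_add_one]
    rw [show 2 * j + 1 + 1 = 2 * (j + 1) by ring]

lemma win_head' {n : ℕ} (hn : 1 ≤ n) (i : ℕ) : (win i n).head? = some (tm i) := by
  obtain ⟨m, rfl⟩ : ∃ m, n = m + 1 := ⟨n - 1, by omega⟩
  rw [win_succ]; rfl

lemma win_last' {n : ℕ} (hn : 1 ≤ n) (i : ℕ) : (win i n).getLast? = some (tm (i + (n - 1))) := by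
  obtain ⟨m, rfl⟩ : ∃ m, n = m + 1 := ⟨n - 1, by omega⟩
  rw [win_snoc, show m + 1 - 1 = m by omega]
  exact List.getLast?_concat

lemma win_drop' {n : ℕ} (hn : 1 ≤ n) (i : ℕ) : (win i n).drop 1 = win (i + 1) (n - 1) := by
  obtain ⟨m, rfl⟩ : ∃ m, n = m + 1 := ⟨n - 1, by omega⟩
  rw [win_succ]; rfl

lemma win_dropLast' {n : ℕ} (hn : 1 ≤ n) (i : ℕ) : (win i n).dropLast = win i (n - 1) := by
  obtain ⟨m, rfl⟩ : ∃ m, n = m + 1 := ⟨n - 1, by omega⟩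
  rw [win_snoc, show m + 1 - 1 = m by omega]
  exact List.dropLast_concat

/-! ### evens lemmas -/

@[simp] lemma evens_nil : evens [] = [] := rfl
@[simp] lemma evens_one (a : Bool) : evens [a] = [a] := rfl
@[simp] lemma evens_cons2 (a b : Bool) (l : List Bool) : evens (a :: b :: l) = a :: evens l := rfl

lemma mu_ne_nil {l : List Bool} (h : l ≠ []) : mu l ≠ [] := by
  cases l <;> simp_all [mu]

lemma evens_mu (v : List Bool) : evens (mu v) = v := by
  induction v with
  | nil => rfl
  | cons a l ih => simp [mu, ih]

lemma evens_dropLast_mu (v : List Bool) : evens ((mu v).dropLast) = v := by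
  induction v with
  | nil => rfl
  | cons a l ih =>
    cases l with
    | nil => rfl
    | cons b l' =>
      show evens ((a :: (!a) :: mu (b :: l')).dropLast) = _
      rw [List.dropLast_cons_of_ne_nil (by simp : ((!a) :: mu (b :: l')) ≠ []),
        List.dropLast_cons_of_ne_nil (mu_ne_nil (by simp)), evens_cons2, ih]

lemma evens_cons_mu (l : List Bool) (b : Bool) :
    evens (b :: mu l) = b :: l.map (fun x => !x) := by
  induction l generalizing b with
  | nil => rfl
  | cons c l' ih => simp [mu, ih]

lemma evens_drop_mu (v : List Bool) : evens ((mu v).drop 1) = v.map (fun x => !x) := by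
  cases v with
  | nil => rfl
  | cons a l =>
    show evens ((!a) :: mu l) = _
    rw [evens_cons_mu]
    rfl

def rO (u : List Bool) : List Bool := (!u.headI) :: evens (u.tail)

lemma rO_spec (a : Bool) (l : List Bool) (h : l ≠ []) :
    rO (((mu (a :: l)).drop 1).dropLast) = a :: l := by
  show rO (((!a) :: mu l).dropLast) = _
  rw [List.dropLast_cons_of_ne_nil (mu_ne_nil h)]
  show (!(!a)) :: evens ((mu l).dropLast) = _
  rw [Bool.not_not, evens_dropLast_mu]

lemma gO_retr {v : List Bool} (hv : 2 ≤ v.length) : rO (((mu v).drop 1).dropLast) = v := by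
  cases v with
  | nil => simp at hv
  | cons a l =>
    cases l with
    | nil => simp at hv
    | cons b l' => exact rO_spec a (b :: l') (by simp)

lemma map_not_inj {v w : List Bool} (h : v.map (fun x => !x) = w.map (fun x => !x)) : v = w := by
  have h2 := congrArg (List.map (fun x => !x)) h
  rw [List.map_map, List.map_map] at h2
  have e : ((fun x => !x) ∘ fun x : Bool => !x) = id := by
    funext x; simp
  rw [e, List.map_id, List.map_id] at h2
  exact h2


/-! ### factor sets -/

def Pset (n : ℕ) : Set (List Bool) := {u | FactorOf u tm ∧ u.length = n}
def Aset (n : ℕ) : Set (List Bool) :=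
  {u | FactorOf u tm ∧ u.length = n ∧ u.head? = u.getLast?}
def Bset (n : ℕ) : Set (List Bool) :=
  {u | FactorOf u tm ∧ u.length = n ∧ u.head? ≠ u.getLast?}

lemma mem_Pset {u : List Bool} {n : ℕ} : u ∈ Pset n ↔ ∃ i, u = win i n := by
  constructor
  · rintro ⟨⟨i, hu⟩, hlen⟩
    rw [hlen] at hu
    exact ⟨i, hu⟩
  · rintro ⟨i, rfl⟩
    refine ⟨⟨i, ?_⟩, win_length i n⟩
    rw [win_length]
    rfl

lemma mem_Aset {u : List Bool} {n : ℕ} :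
    u ∈ Aset n ↔ (∃ i, u = win i n) ∧ u.head? = u.getLast? := by
  constructor
  · rintro ⟨hf, hl, hh⟩
    exact ⟨mem_Pset.mp ⟨hf, hl⟩, hh⟩
  · rintro ⟨hp, hh⟩
    obtain ⟨hf, hl⟩ := mem_Pset.mpr hp
    exact ⟨hf, hl, hh⟩

lemma mem_Bset {u : List Bool} {n : ℕ} :
    u ∈ Bset n ↔ (∃ i, u = win i n) ∧ u.head? ≠ u.getLast? := by
  constructor
  · rintro ⟨hf, hl, hh⟩
    exact ⟨mem_Pset.mp ⟨hf, hl⟩, hh⟩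
  · rintro ⟨hp, hh⟩
    obtain ⟨hf, hl⟩ := mem_Pset.mpr hp
    exact ⟨hf, hl, hh⟩

lemma mem_Aset_win {j n : ℕ} (hn : 1 ≤ n) :
    win j n ∈ Aset n ↔ tm j = tm (j + (n - 1)) := by
  rw [mem_Aset, win_head' hn, win_last' hn]
  constructor
  · rintro ⟨-, h⟩
    exact Option.some.inj h
  · intro h
    exact ⟨⟨j, rfl⟩, by rw [h]⟩

lemma mem_Bset_win {j n : ℕ} (hn : 1 ≤ n) :
    win j n ∈ Bset n ↔ tm j ≠ tm (j + (n - 1)) := by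
  rw [mem_Bset, win_head' hn, win_last' hn]
  constructor
  · rintro ⟨-, h⟩
    exact fun he => h (by rw [he])
  · intro h
    exact ⟨⟨j, rfl⟩, fun he => h (Option.some.inj he)⟩

lemma Pset_finite (n : ℕ) : (Pset n).Finite :=
  (List.finite_length_eq Bool n).subset fun _ hu => hu.2

lemma Aset_finite (n : ℕ) : (Aset n).Finite :=
  (Pset_finite n).subset fun _ hu => ⟨hu.1, hu.2.1⟩

lemma Bset_finite (n : ℕ) : (Bset n).Finite :=
  (Pset_finite n).subset fun _ hu => ⟨hu.1, hu.2.1⟩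

/-! ### counting helpers -/

lemma count_lower (g1 g2 : List Bool → List Bool) (S1 S2 T : Set (List Bool))
    (hT : T.Finite)
    (h1 : ∀ u ∈ S1, g1 u ∈ T) (h2 : ∀ u ∈ S2, g2 u ∈ T)
    (inj1 : Set.InjOn g1 S1) (inj2 : Set.InjOn g2 S2)
    (hdisj : ∀ u ∈ S1, ∀ v ∈ S2, g1 u ≠ g2 v) :
    S1.ncard + S2.ncard ≤ T.ncard := by
  have hsub : g1 '' S1 ∪ g2 '' S2 ⊆ T := by
    rintro u (⟨v, hv, rfl⟩ | ⟨v, hv, rfl⟩)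
    · exact h1 v hv
    · exact h2 v hv
  have hd : Disjoint (g1 '' S1) (g2 '' S2) := by
    rw [Set.disjoint_left]
    rintro u ⟨v, hv, rfl⟩ ⟨w, hw, he⟩
    exact hdisj v hv w hw he.symm
  have f1 : (g1 '' S1).Finite := hT.subset fun u hu => hsub (Or.inl hu)
  have f2 : (g2 '' S2).Finite := hT.subset fun u hu => hsub (Or.inr hu)
  calc S1.ncard + S2.ncard = (g1 '' S1).ncard + (g2 '' S2).ncard := by
        rw [Set.ncard_image_of_injOn inj1, Set.ncard_image_of_injOn inj2]
    _ = (g1 '' S1 ∪ g2 '' S2).ncard := (Set.ncard_union_eq hd f1 f2).symm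
    _ ≤ T.ncard := Set.ncard_le_ncard hsub hT

lemma count_upper (g1 g2 : List Bool → List Bool) (S T1 T2 : Set (List Bool))
    (hT1 : T1.Finite) (hT2 : T2.Finite)
    (hsub : S ⊆ g1 '' T1 ∪ g2 '' T2) :
    S.ncard ≤ T1.ncard + T2.ncard :=
  calc S.ncard ≤ (g1 '' T1 ∪ g2 '' T2).ncard :=
        Set.ncard_le_ncard hsub ((hT1.image _).union (hT2.image _))
    _ ≤ (g1 '' T1).ncard + (g2 '' T2).ncard := Set.ncard_union_le _ _
    _ ≤ T1.ncard + T2.ncard := add_le_add (Set.ncard_image_le hT1) (Set.ncard_image_le hT2)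

lemma ncard_le_card_of_subset {S : Set (List Bool)} {F : Finset (List Bool)} (h : S ⊆ ↑F) :
    S.ncard ≤ F.card := by
  have := Set.ncard_le_ncard h F.finite_toSet
  rwa [Set.ncard_coe_finset] at this

lemma card_le_ncard_of_subset {F : Finset (List Bool)} {S : Set (List Bool)} (h : ↑F ⊆ S)
    (hS : S.Finite) : F.card ≤ S.ncard := by
  have := Set.ncard_le_ncard h hS
  rwa [Set.ncard_coe_finset] at this

/-! ### the three substitution maps on windows -/

lemma g1_win {m : ℕ} (hm : 1 ≤ m) (j : ℕ) :
    (mu (win j m)).dropLast = win (2 * j) (2 * m - 1) := by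
  rw [mu_win, win_dropLast' (by omega)]

lemma g2_win {m : ℕ} (hm : 1 ≤ m) (j : ℕ) :
    (mu (win j m)).drop 1 = win (2 * j + 1) (2 * m - 1) := by
  rw [mu_win, win_drop' (by omega)]

lemma gO_win {m : ℕ} (hm : 1 ≤ m) (j : ℕ) :
    ((mu (win j m)).drop 1).dropLast = win (2 * j + 1) (2 * m - 2) := by
  rw [g2_win hm, win_dropLast' (by omega), show 2 * m - 1 - 1 = 2 * m - 2 by omega]

lemma not_both_parities {j j' m : ℕ} (hm : 5 ≤ m)
    (h : win (2 * j) m = win (2 * j' + 1) m) : False := by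
  have e1 := win_entries h 1 (by omega)
  have e2 := win_entries h 2 (by omega)
  have e3 := win_entries h 3 (by omega)
  have e4 := win_entries h 4 (by omega)
  have p1 : tm (2 * j' + 1 + 1) ≠ tm (2 * j' + 1 + 2) := by
    rw [show 2 * j' + 1 + 1 = 2 * (j' + 1) by ring,
      show 2 * j' + 1 + 2 = 2 * (j' + 1) + 1 by ring, tm_succ_two_mul]
    cases tm (2 * (j' + 1)) <;> simp
  have p2 : tm (2 * j' + 1 + 3) ≠ tm (2 * j' + 1 + 4) := by
    rw [show 2 * j' + 1 + 3 = 2 * (j' + 2) by ring,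
      show 2 * j' + 1 + 4 = 2 * (j' + 2) + 1 by ring, tm_succ_two_mul]
    cases tm (2 * (j' + 2)) <;> simp
  exact alt_aux (j := j) (by rw [e1, e2]; exact p1) (by rw [e3, e4]; exact p2)


/-! ### the substitution maps as defs -/

def gOdd (v : List Bool) : List Bool := ((mu v).drop 1).dropLast
def gL (v : List Bool) : List Bool := (mu v).dropLast
def gR (v : List Bool) : List Bool := (mu v).drop 1

lemma gOdd_win {m : ℕ} (hm : 1 ≤ m) (j : ℕ) :
    gOdd (win j m) = win (2 * j + 1) (2 * m - 2) := gO_win hm j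
lemma gL_win {m : ℕ} (hm : 1 ≤ m) (j : ℕ) :
    gL (win j m) = win (2 * j) (2 * m - 1) := g1_win hm j
lemma gR_win {m : ℕ} (hm : 1 ≤ m) (j : ℕ) :
    gR (win j m) = win (2 * j + 1) (2 * m - 1) := g2_win hm j

lemma mu_injOn (S : Set (List Bool)) : Set.InjOn mu S := fun v _ w _ h => by
  rw [← evens_mu v, h, evens_mu]

lemma gL_injOn (S : Set (List Bool)) : Set.InjOn gL S := fun v _ w _ h => by
  have h2 := congrArg evens h
  simp only [gL, evens_dropLast_mu] at h2
  exact h2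

lemma gR_injOn (S : Set (List Bool)) : Set.InjOn gR S := fun v _ w _ h => by
  have h2 := congrArg evens h
  simp only [gR, evens_drop_mu] at h2
  exact map_not_inj h2

lemma gOdd_retr {v : List Bool} (hv : 2 ≤ v.length) : rO (gOdd v) = v := gO_retr hv

lemma gOdd_injOn {n : ℕ} (hn : 2 ≤ n) (S : Set (List Bool)) (hS : ∀ v ∈ S, v.length = n) :
    Set.InjOn gOdd S := fun v hv w hw h => by
  have hv2 : 2 ≤ v.length := by rw [hS v hv]; omega
  have hw2 : 2 ≤ w.length := by rw [hS w hw]; omega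
  have h' : rO (gOdd v) = rO (gOdd w) := by rw [h]
  rwa [gOdd_retr hv2, gOdd_retr hw2] at h'

/-! ### upper bounds -/

lemma upper_even (k : ℕ) :
    (Pset (2 * (k + 1))).ncard ≤ (Pset (k + 1)).ncard + (Pset (k + 2)).ncard := by
  apply count_upper mu gOdd _ _ _ (Pset_finite _) (Pset_finite _)
  intro u hu
  obtain ⟨i, rfl⟩ := mem_Pset.mp hu
  rcases Nat.even_or_odd i with ⟨j, hj⟩ | ⟨j, hj⟩
  · left
    exact ⟨win j (k + 1), mem_Pset.mpr ⟨j, rfl⟩, by rw [mu_win, show 2 * j = i by omega]⟩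
  · right
    refine ⟨win j (k + 2), mem_Pset.mpr ⟨j, rfl⟩, ?_⟩
    rw [gOdd_win (by omega), show 2 * (k + 2) - 2 = 2 * (k + 1) by omega,
      show 2 * j + 1 = i by omega]

lemma upper_odd (n : ℕ) :
    (Pset (2 * n + 1)).ncard ≤ 2 * (Pset (n + 1)).ncard := by
  rw [two_mul ((Pset (n + 1)).ncard)]
  apply count_upper gL gR _ _ _ (Pset_finite _) (Pset_finite _)
  intro u hu
  obtain ⟨i, rfl⟩ := mem_Pset.mp hu
  rcases Nat.even_or_odd i with ⟨j, hj⟩ | ⟨j, hj⟩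
  · left
    refine ⟨win j (n + 1), mem_Pset.mpr ⟨j, rfl⟩, ?_⟩
    rw [gL_win (by omega), show 2 * (n + 1) - 1 = 2 * n + 1 by omega, show 2 * j = i by omega]
  · right
    refine ⟨win j (n + 1), mem_Pset.mpr ⟨j, rfl⟩, ?_⟩
    rw [gR_win (by omega), show 2 * (n + 1) - 1 = 2 * n + 1 by omega, show 2 * j + 1 = i by omega]

/-! ### lower bounds -/

lemma lower_even_A (k : ℕ) :
    (Bset (k + 3)).ncard + (Bset (k + 4)).ncard ≤ (Aset (2 * (k + 3))).ncard := by
  apply count_lower mu gOdd _ _ _ (Aset_finite _)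
  · intro u hu
    obtain ⟨⟨j, rfl⟩, -⟩ := mem_Bset.mp hu
    have hne : tm j ≠ tm (j + (k + 2)) := by
      have h := (mem_Bset_win (by omega : 1 ≤ k + 3)).mp hu
      rwa [show k + 3 - 1 = k + 2 by omega] at h
    rw [mu_win, mem_Aset_win (by omega),
      show 2 * j + (2 * (k + 3) - 1) = 2 * (j + (k + 2)) + 1 by omega,
      tm_two_mul, tm_two_mul_add_one]
    cases h1 : tm j <;> cases h2 : tm (j + (k + 2)) <;> simp_all
  · intro u hu
    obtain ⟨⟨j, rfl⟩, -⟩ := mem_Bset.mp hu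
    have hne : tm j ≠ tm (j + (k + 3)) := by
      have h := (mem_Bset_win (by omega : 1 ≤ k + 4)).mp hu
      rwa [show k + 4 - 1 = k + 3 by omega] at h
    rw [gOdd_win (by omega), show 2 * (k + 4) - 2 = 2 * (k + 3) by omega,
      mem_Aset_win (by omega), tm_two_mul_add_one,
      show 2 * j + 1 + (2 * (k + 3) - 1) = 2 * (j + (k + 3)) by omega, tm_two_mul]
    cases h1 : tm j <;> cases h2 : tm (j + (k + 3)) <;> simp_all
  · exact mu_injOn _
  · exact gOdd_injOn (by omega) _ (fun v hv => hv.2.1)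
  · rintro u hu v hv
    obtain ⟨⟨j, rfl⟩, -⟩ := mem_Bset.mp hu
    obtain ⟨⟨j', rfl⟩, -⟩ := mem_Bset.mp hv
    rw [mu_win, gOdd_win (by omega), show 2 * (k + 4) - 2 = 2 * (k + 3) by omega]
    intro he
    exact not_both_parities (by omega) he

lemma lower_even_B (k : ℕ) :
    (Aset (k + 3)).ncard + (Aset (k + 4)).ncard ≤ (Bset (2 * (k + 3))).ncard := by
  apply count_lower mu gOdd _ _ _ (Bset_finite _)
  · intro u hu
    obtain ⟨⟨j, rfl⟩, -⟩ := mem_Aset.mp hu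
    have heq : tm j = tm (j + (k + 2)) := by
      have h := (mem_Aset_win (by omega : 1 ≤ k + 3)).mp hu
      rwa [show k + 3 - 1 = k + 2 by omega] at h
    rw [mu_win, mem_Bset_win (by omega),
      show 2 * j + (2 * (k + 3) - 1) = 2 * (j + (k + 2)) + 1 by omega,
      tm_two_mul, tm_two_mul_add_one]
    cases h1 : tm j <;> cases h2 : tm (j + (k + 2)) <;> simp_all
  · intro u hu
    obtain ⟨⟨j, rfl⟩, -⟩ := mem_Aset.mp hu
    have heq : tm j = tm (j + (k + 3)) := by
      have h := (mem_Aset_win (by omega : 1 ≤ k + 4)).mp hu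
      rwa [show k + 4 - 1 = k + 3 by omega] at h
    rw [gOdd_win (by omega), show 2 * (k + 4) - 2 = 2 * (k + 3) by omega,
      mem_Bset_win (by omega), tm_two_mul_add_one,
      show 2 * j + 1 + (2 * (k + 3) - 1) = 2 * (j + (k + 3)) by omega, tm_two_mul]
    cases h1 : tm j <;> cases h2 : tm (j + (k + 3)) <;> simp_all
  · exact mu_injOn _
  · exact gOdd_injOn (by omega) _ (fun v hv => hv.2.1)
  · rintro u hu v hv
    obtain ⟨⟨j, rfl⟩, -⟩ := mem_Aset.mp hu
    obtain ⟨⟨j', rfl⟩, -⟩ := mem_Aset.mp hv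
    rw [mu_win, gOdd_win (by omega), show 2 * (k + 4) - 2 = 2 * (k + 3) by omega]
    intro he
    exact not_both_parities (by omega) he

lemma lower_odd_A (k : ℕ) :
    2 * (Aset (k + 3)).ncard ≤ (Aset (2 * (k + 2) + 1)).ncard := by
  rw [two_mul ((Aset (k + 3)).ncard)]
  apply count_lower gL gR _ _ _ (Aset_finite _)
  · intro u hu
    obtain ⟨⟨j, rfl⟩, -⟩ := mem_Aset.mp hu
    have heq : tm j = tm (j + (k + 2)) := by
      have h := (mem_Aset_win (by omega : 1 ≤ k + 3)).mp hu
      rwa [show k + 3 - 1 = k + 2 by omega] at h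
    rw [gL_win (by omega), show 2 * (k + 3) - 1 = 2 * (k + 2) + 1 by omega,
      mem_Aset_win (by omega),
      show 2 * j + (2 * (k + 2) + 1 - 1) = 2 * (j + (k + 2)) by omega,
      tm_two_mul, tm_two_mul]
    exact heq
  · intro u hu
    obtain ⟨⟨j, rfl⟩, -⟩ := mem_Aset.mp hu
    have heq : tm j = tm (j + (k + 2)) := by
      have h := (mem_Aset_win (by omega : 1 ≤ k + 3)).mp hu
      rwa [show k + 3 - 1 = k + 2 by omega] at h
    rw [gR_win (by omega), show 2 * (k + 3) - 1 = 2 * (k + 2) + 1 by omega,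
      mem_Aset_win (by omega), tm_two_mul_add_one,
      show 2 * j + 1 + (2 * (k + 2) + 1 - 1) = 2 * (j + (k + 2)) + 1 by omega,
      tm_two_mul_add_one]
    rw [heq]
  · exact gL_injOn _
  · exact gR_injOn _
  · rintro u hu v hv
    obtain ⟨⟨j, rfl⟩, -⟩ := mem_Aset.mp hu
    obtain ⟨⟨j', rfl⟩, -⟩ := mem_Aset.mp hv
    rw [gL_win (by omega), gR_win (by omega)]
    intro he
    exact not_both_parities (by omega) he

lemma lower_odd_B (k : ℕ) :
    2 * (Bset (k + 3)).ncard ≤ (Bset (2 * (k + 2) + 1)).ncard := by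
  rw [two_mul ((Bset (k + 3)).ncard)]
  apply count_lower gL gR _ _ _ (Bset_finite _)
  · intro u hu
    obtain ⟨⟨j, rfl⟩, -⟩ := mem_Bset.mp hu
    have hne : tm j ≠ tm (j + (k + 2)) := by
      have h := (mem_Bset_win (by omega : 1 ≤ k + 3)).mp hu
      rwa [show k + 3 - 1 = k + 2 by omega] at h
    rw [gL_win (by omega), show 2 * (k + 3) - 1 = 2 * (k + 2) + 1 by omega,
      mem_Bset_win (by omega),
      show 2 * j + (2 * (k + 2) + 1 - 1) = 2 * (j + (k + 2)) by omega,
      tm_two_mul, tm_two_mul]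
    exact hne
  · intro u hu
    obtain ⟨⟨j, rfl⟩, -⟩ := mem_Bset.mp hu
    have hne : tm j ≠ tm (j + (k + 2)) := by
      have h := (mem_Bset_win (by omega : 1 ≤ k + 3)).mp hu
      rwa [show k + 3 - 1 = k + 2 by omega] at h
    rw [gR_win (by omega), show 2 * (k + 3) - 1 = 2 * (k + 2) + 1 by omega,
      mem_Bset_win (by omega), tm_two_mul_add_one,
      show 2 * j + 1 + (2 * (k + 2) + 1 - 1) = 2 * (j + (k + 2)) + 1 by omega,
      tm_two_mul_add_one]
    cases h1 : tm j <;> cases h2 : tm (j + (k + 2)) <;> simp_all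
  · exact gL_injOn _
  · exact gR_injOn _
  · rintro u hu v hv
    obtain ⟨⟨j, rfl⟩, -⟩ := mem_Bset.mp hu
    obtain ⟨⟨j', rfl⟩, -⟩ := mem_Bset.mp hv
    rw [gL_win (by omega), gR_win (by omega)]
    intro he
    exact not_both_parities (by omega) he


/-! ### base cases -/

lemma win_two (i : ℕ) : win i 2 = [tm i, tm (i + 1)] := rfl
lemma win_three (i : ℕ) : win i 3 = [tm i, tm (i + 1), tm (i + 2)] := rfl
lemma win_four (i : ℕ) : win i 4 = [tm i, tm (i + 1), tm (i + 2), tm (i + 3)] := rfl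

lemma tm0 : tm 0 = false := by norm_num [tm]
lemma tm1 : tm 1 = true := by norm_num [tm, Nat.digits_def']
lemma tm2 : tm 2 = true := by norm_num [tm, Nat.digits_def']
lemma tm3 : tm 3 = false := by norm_num [tm, Nat.digits_def']
lemma tm4 : tm 4 = true := by norm_num [tm, Nat.digits_def']
lemma tm5 : tm 5 = false := by norm_num [tm, Nat.digits_def']
lemma tm6 : tm 6 = false := by norm_num [tm, Nat.digits_def']
lemma tm7 : tm 7 = true := by norm_num [tm, Nat.digits_def']
lemma tm8 : tm 8 = true := by norm_num [tm, Nat.digits_def']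
lemma tm9 : tm 9 = false := by norm_num [tm, Nat.digits_def']
lemma tm10 : tm 10 = false := by norm_num [tm, Nat.digits_def']
lemma tm11 : tm 11 = true := by norm_num [tm, Nat.digits_def']
lemma tm12 : tm 12 = false := by norm_num [tm, Nat.digits_def']
lemma tm13 : tm 13 = true := by norm_num [tm, Nat.digits_def']

lemma base2 :
    (Pset 2).ncard ≤ 3 * (Aset 2).ncard ∧ (Pset 2).ncard ≤ 3 * (Bset 2).ncard := by
  have hP : (Pset 2).ncard ≤ 4 := by
    apply ncard_le_card_of_subset
      (F := {[false, false], [false, true], [true, false], [true, true]})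
    intro u hu
    obtain ⟨i, rfl⟩ := mem_Pset.mp hu
    rw [win_two]
    have key : ∀ a b : Bool, [a, b] ∈
        (↑({[false, false], [false, true], [true, false], [true, true]} :
          Finset (List Bool)) : Set (List Bool)) := by decide
    exact key _ _
  have hA : 2 ≤ (Aset 2).ncard := by
    apply card_le_ncard_of_subset (F := {[false, false], [true, true]}) _ (Aset_finite 2)
    intro u hu
    simp only [Finset.coe_insert, Finset.coe_singleton, Set.mem_insert_iff,
      Set.mem_singleton_iff] at hu
    rcases hu with rfl | rfl
    · exact mem_Aset.mpr ⟨⟨5, by rw [win_two, tm5, tm6]⟩, by decide⟩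
    · exact mem_Aset.mpr ⟨⟨1, by rw [win_two, tm1, tm2]⟩, by decide⟩
  have hB : 2 ≤ (Bset 2).ncard := by
    apply card_le_ncard_of_subset (F := {[false, true], [true, false]}) _ (Bset_finite 2)
    intro u hu
    simp only [Finset.coe_insert, Finset.coe_singleton, Set.mem_insert_iff,
      Set.mem_singleton_iff] at hu
    rcases hu with rfl | rfl
    · exact mem_Bset.mpr ⟨⟨0, by rw [win_two, tm0, tm1]⟩, by decide⟩
    · exact mem_Bset.mpr ⟨⟨2, by rw [win_two, tm2, tm3]⟩, by decide⟩
  exact ⟨hP.trans (by omega), hP.trans (by omega)⟩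

lemma base3 :
    (Pset 3).ncard ≤ 3 * (Aset 3).ncard ∧ (Pset 3).ncard ≤ 3 * (Bset 3).ncard := by
  have hP : (Pset 3).ncard ≤ 6 := by
    apply ncard_le_card_of_subset
      (F := {[false, false, true], [false, true, false], [false, true, true],
             [true, false, false], [true, false, true], [true, true, false]})
    intro u hu
    obtain ⟨i, rfl⟩ := mem_Pset.mp hu
    rw [win_three]
    have no3 : ¬ (tm i = tm (i + 1) ∧ tm (i + 1) = tm (i + 2)) := no_three i
    have key : ∀ a b c : Bool, ¬ (a = b ∧ b = c) → [a, b, c] ∈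
        (↑({[false, false, true], [false, true, false], [false, true, true],
             [true, false, false], [true, false, true], [true, true, false]} :
          Finset (List Bool)) : Set (List Bool)) := by decide
    exact key _ _ _ no3
  have hA : 2 ≤ (Aset 3).ncard := by
    apply card_le_ncard_of_subset (F := {[false, true, false], [true, false, true]}) _
      (Aset_finite 3)
    intro u hu
    simp only [Finset.coe_insert, Finset.coe_singleton, Set.mem_insert_iff,
      Set.mem_singleton_iff] at hu
    rcases hu with rfl | rfl
    · exact mem_Aset.mpr ⟨⟨3, by rw [win_three, tm3, tm4, tm5]⟩, by decide⟩
    · exact mem_Aset.mpr ⟨⟨2, by rw [win_three, tm2, tm3, tm4]⟩, by decide⟩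
  have hB : 2 ≤ (Bset 3).ncard := by
    apply card_le_ncard_of_subset (F := {[false, true, true], [true, true, false]}) _
      (Bset_finite 3)
    intro u hu
    simp only [Finset.coe_insert, Finset.coe_singleton, Set.mem_insert_iff,
      Set.mem_singleton_iff] at hu
    rcases hu with rfl | rfl
    · exact mem_Bset.mpr ⟨⟨0, by rw [win_three, tm0, tm1, tm2]⟩, by decide⟩
    · exact mem_Bset.mpr ⟨⟨1, by rw [win_three, tm1, tm2, tm3]⟩, by decide⟩
  exact ⟨hP.trans (by omega), hP.trans (by omega)⟩

lemma base4 :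
    (Pset 4).ncard ≤ 3 * (Aset 4).ncard ∧ (Pset 4).ncard ≤ 3 * (Bset 4).ncard := by
  have hP : (Pset 4).ncard ≤ 10 := by
    apply ncard_le_card_of_subset
      (F := {[false, false, true, false], [false, false, true, true],
             [false, true, false, false], [false, true, false, true],
             [false, true, true, false], [true, false, false, true],
             [true, false, true, false], [true, false, true, true],
             [true, true, false, false], [true, true, false, true]})
    intro u hu
    obtain ⟨i, rfl⟩ := mem_Pset.mp hu
    rw [win_four]
    have no3a : ¬ (tm i = tm (i + 1) ∧ tm (i + 1) = tm (i + 2)) := no_three i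
    have no3b : ¬ (tm (i + 1) = tm (i + 2) ∧ tm (i + 2) = tm (i + 3)) := no_three (i + 1)
    have key : ∀ a b c d : Bool, ¬ (a = b ∧ b = c) → ¬ (b = c ∧ c = d) → [a, b, c, d] ∈
        (↑({[false, false, true, false], [false, false, true, true],
             [false, true, false, false], [false, true, false, true],
             [false, true, true, false], [true, false, false, true],
             [true, false, true, false], [true, false, true, true],
             [true, true, false, false], [true, true, false, true]} :
          Finset (List Bool)) : Set (List Bool)) := by decide
    exact key _ _ _ _ no3a no3b
  have hA : 4 ≤ (Aset 4).ncard := by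
    apply card_le_ncard_of_subset
      (F := {[false, true, true, false], [true, true, false, true],
             [false, true, false, false], [true, false, false, true]}) _ (Aset_finite 4)
    intro u hu
    simp only [Finset.coe_insert, Finset.coe_singleton, Set.mem_insert_iff,
      Set.mem_singleton_iff] at hu
    rcases hu with rfl | rfl | rfl | rfl
    · exact mem_Aset.mpr ⟨⟨0, by rw [win_four, tm0, tm1, tm2, tm3]⟩, by decide⟩
    · exact mem_Aset.mpr ⟨⟨1, by rw [win_four, tm1, tm2, tm3, tm4]⟩, by decide⟩
    · exact mem_Aset.mpr ⟨⟨3, by rw [win_four, tm3, tm4, tm5, tm6]⟩, by decide⟩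
    · exact mem_Aset.mpr ⟨⟨4, by rw [win_four, tm4, tm5, tm6, tm7]⟩, by decide⟩
  have hB : 4 ≤ (Bset 4).ncard := by
    apply card_le_ncard_of_subset
      (F := {[true, false, true, false], [false, false, true, true],
             [true, true, false, false], [false, true, false, true]}) _ (Bset_finite 4)
    intro u hu
    simp only [Finset.coe_insert, Finset.coe_singleton, Set.mem_insert_iff,
      Set.mem_singleton_iff] at hu
    rcases hu with rfl | rfl | rfl | rfl
    · exact mem_Bset.mpr ⟨⟨2, by rw [win_four, tm2, tm3, tm4, tm5]⟩, by decide⟩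
    · exact mem_Bset.mpr ⟨⟨5, by rw [win_four, tm5, tm6, tm7, tm8]⟩, by decide⟩
    · exact mem_Bset.mpr ⟨⟨7, by rw [win_four, tm7, tm8, tm9, tm10]⟩, by decide⟩
    · exact mem_Bset.mpr ⟨⟨10, by rw [win_four, tm10, tm11, tm12, tm13]⟩, by decide⟩
  exact ⟨hP.trans (by omega), hP.trans (by omega)⟩

/-! ### main induction -/

lemma main : ∀ n : ℕ, 2 ≤ n →
    (Pset n).ncard ≤ 3 * (Aset n).ncard ∧ (Pset n).ncard ≤ 3 * (Bset n).ncard := by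
  intro n
  induction n using Nat.strong_induction_on with
  | _ n ih =>
  intro hn
  rcases lt_or_ge n 5 with h5 | h5
  · interval_cases n
    · exact base2
    · exact base3
    · exact base4
  · rcases Nat.even_or_odd n with ⟨t, ht⟩ | ⟨t, ht⟩
    · obtain ⟨k, rfl⟩ : ∃ k, n = 2 * (k + 3) := ⟨t - 3, by omega⟩
      have ih1 := ih (k + 3) (by omega) (by omega)
      have ih2 := ih (k + 4) (by omega) (by omega)
      constructor
      · calc (Pset (2 * (k + 3))).ncard
            ≤ (Pset (k + 3)).ncard + (Pset (k + 4)).ncard := upper_even (k + 2)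
          _ ≤ 3 * (Bset (k + 3)).ncard + 3 * (Bset (k + 4)).ncard := add_le_add ih1.2 ih2.2
          _ = 3 * ((Bset (k + 3)).ncard + (Bset (k + 4)).ncard) := by ring
          _ ≤ 3 * (Aset (2 * (k + 3))).ncard := Nat.mul_le_mul_left 3 (lower_even_A k)
      · calc (Pset (2 * (k + 3))).ncard
            ≤ (Pset (k + 3)).ncard + (Pset (k + 4)).ncard := upper_even (k + 2)
          _ ≤ 3 * (Aset (k + 3)).ncard + 3 * (Aset (k + 4)).ncard := add_le_add ih1.1 ih2.1
          _ = 3 * ((Aset (k + 3)).ncard + (Aset (k + 4)).ncard) := by ring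
          _ ≤ 3 * (Bset (2 * (k + 3))).ncard := Nat.mul_le_mul_left 3 (lower_even_B k)
    · obtain ⟨k, rfl⟩ : ∃ k, n = 2 * (k + 2) + 1 := ⟨t - 2, by omega⟩
      have ih1 := ih (k + 3) (by omega) (by omega)
      constructor
      · calc (Pset (2 * (k + 2) + 1)).ncard
            ≤ 2 * (Pset (k + 3)).ncard := upper_odd (k + 2)
          _ ≤ 2 * (3 * (Aset (k + 3)).ncard) := Nat.mul_le_mul_left 2 ih1.1
          _ = 3 * (2 * (Aset (k + 3)).ncard) := by ring
          _ ≤ 3 * (Aset (2 * (k + 2) + 1)).ncard := Nat.mul_le_mul_left 3 (lower_odd_A k)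
      · calc (Pset (2 * (k + 2) + 1)).ncard
            ≤ 2 * (Pset (k + 3)).ncard := upper_odd (k + 2)
          _ ≤ 2 * (3 * (Bset (k + 3)).ncard) := Nat.mul_le_mul_left 2 ih1.2
          _ = 3 * (2 * (Bset (k + 3)).ncard) := by ring
          _ ≤ 3 * (Bset (2 * (k + 2) + 1)).ncard := Nat.mul_le_mul_left 3 (lower_odd_B k)

end TM8

/-- For every `n ≥ 2`, at least one-third of the length-`n` factors of the
Thue-Morse word begin and end with the same letter, and at least one-third
begin and end with different letters. -/
theorem stmt8 (n : ℕ) (hn : 2 ≤ n) :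
    {u : List Bool | FactorOf u tm ∧ u.length = n}.ncard ≤
      3 * {u : List Bool | FactorOf u tm ∧ u.length = n ∧
            u.head? = u.getLast?}.ncard ∧
    {u : List Bool | FactorOf u tm ∧ u.length = n}.ncard ≤
      3 * {u : List Bool | FactorOf u tm ∧ u.length = n ∧
            u.head? ≠ u.getLast?}.ncard :=
  TM8.main n hn
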